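/- The retraction map r_α on iterated Q-labeled forests, defined by r_α(q) = q, r_α(⊔_i F_i) = ⊔_i r_α(F_i), r_α(T·V) = r_α(T) ⊔ r_α(V), and r_α(s_β(T)) = r_α(T) if β < α, = T if β = α, = s_β(T) if β > α, is an endomorphism of the homomorphism quasi-order: T ≤_h S implies r_α(T) ≤_h r_α(S). -/
import Mathlib


open Ordinal

/-- Terms of the iterated `Q`-labeled forest structure `𝒯^⊔_{ω₁}(Q)`:
constants `q ∈ Q`, singleton terms `s_α(T)`, tree terms `A·B` (singleton `·` forest),
and forest terms `⊔_i T_i` (countable disjoint unions, encoded as `ℕ`-indexed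
families). -/
inductive ITerm (Q : Type) : Type 1 where
  | const : Q → ITerm Q
  | s : Ordinal.{0} → ITerm Q → ITerm Q
  | dot : ITerm Q → (ℕ → ITerm Q) → ITerm Q
  | sup : (ℕ → ITerm Q) → ITerm Q

/-- Singleton terms: constants and `s_α`-terms. -/
def ITerm.IsSng {Q : Type} : ITerm Q → Prop
  | .const _ => True
  | .s _ _ => True
  | _ => False

/-- The homomorphism quasi-order `≤_h` on iterated terms, defined recursively by:
`q ≤_h q'` iff `q ≤_Q q'`; `p ≡_h s_α(p)` for `p ∈ Q`;
`s_α(U) ≤_h s_β(V)` iff `U ≤_h V` (`α = β`), iff `s_α(U) ≤_h V` (`α > β`),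
iff `U ≤_h s_β(V)` (`α < β`); `A·B ≤_h C·D` iff (`A ≤_h C` and `B ≤_h C·D`) or
`A·B ≤_h D_i` for some `i`; `⊔_i B_i ≤_h T` iff all `B_i ≤_h T`; a non-forest term
is `≤_h ⊔_i D_i` iff it is `≤_h D_i` for some `i`; a tree `A·B` is below a
singleton `S` iff `A` and all trees of `B` are; a singleton `S ≤_h C·D` iff
`S ≤_h C` or `S ≤_h D_i` for some `i`. -/
inductive HLe {Q : Type} (le : Q → Q → Prop) : ITerm Q → ITerm Q → Prop where
  | const {p q : Q} : le p q → HLe le (.const p) (.const q)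
  | const_s_left {p : Q} {α : Ordinal.{0}} {V : ITerm Q} :
      HLe le (.const p) V → HLe le (.s α (.const p)) V
  | const_s_right {p : Q} {α : Ordinal.{0}} {U : ITerm Q} :
      HLe le U (.const p) → HLe le U (.s α (.const p))
  | s_eq {α : Ordinal.{0}} {U V : ITerm Q} :
      HLe le U V → HLe le (.s α U) (.s α V)
  | s_gt {α β : Ordinal.{0}} {U V : ITerm Q} : β < α →
      HLe le (.s α U) V → HLe le (.s α U) (.s β V)
  | s_lt {α β : Ordinal.{0}} {U V : ITerm Q} : α < β →
      HLe le U (.s β V) → HLe le (.s α U) (.s β V)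
  | dot_dot {A C : ITerm Q} {B D : ℕ → ITerm Q} :
      HLe le A C → (∀ n, HLe le (B n) (.dot C D)) →
      HLe le (.dot A B) (.dot C D)
  | dot_drop {A C : ITerm Q} {B D : ℕ → ITerm Q} {n : ℕ} :
      HLe le (.dot A B) (D n) → HLe le (.dot A B) (.dot C D)
  | sup_le {B : ℕ → ITerm Q} {T : ITerm Q} :
      (∀ n, HLe le (B n) T) → HLe le (.sup B) T
  | le_sup {D : ℕ → ITerm Q} {T : ITerm Q} {n : ℕ} :
      HLe le T (D n) → HLe le T (.sup D)
  | dot_sng {S A : ITerm Q} {B : ℕ → ITerm Q} : S.IsSng →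
      HLe le A S → (∀ n, HLe le (B n) S) → HLe le (.dot A B) S
  | sng_dot {S C : ITerm Q} {D : ℕ → ITerm Q} : S.IsSng →
      HLe le S C → HLe le S (.dot C D)
  | sng_dot_drop {S C : ITerm Q} {D : ℕ → ITerm Q} {n : ℕ} : S.IsSng →
      HLe le S (D n) → HLe le S (.dot C D)

/-- `s*_ξ = s_{α₀} ∘ ⋯ ∘ s_{α_m}` for the Cantor normal form
`ξ = ω^{α₀} + ⋯ + ω^{α_m}` (`α₀ ≥ ⋯ ≥ α_m`), given by the list `[α₀, …, α_m]`;
for `ξ = 0` (the empty list) it is the identity. -/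
def sStar {Q : Type} (L : List Ordinal.{0}) (T : ITerm Q) : ITerm Q :=
  L.foldr (fun α t => ITerm.s α t) T

/-- The retraction `r_α` on iterated `Q`-labeled forests. -/
noncomputable def rA {Q : Type} (α : Ordinal.{0}) : ITerm Q → ITerm Q
  | .const q => .const q
  | .s β T => if β < α then rA α T else if β = α then T else .s β T
  | .dot T V => .sup (fun n => match n with
      | 0 => rA α T
      | m + 1 => rA α (V m))
  | .sup F => .sup (fun n => rA α (F n))
  termination_by structural t => t

/-- `r*_ξ = r_{α_m} ∘ ⋯ ∘ r_{α₀}`. -/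
noncomputable def rStar {Q : Type} (L : List Ordinal.{0}) (T : ITerm Q) : ITerm Q :=
  L.foldl (fun t α => rA α t) T

/-- The retraction map `r_α` (defined by `r_α(q) = q`, `r_α(⊔_i F_i) = ⊔_i r_α(F_i)`,
`r_α(T·V) = r_α(T) ⊔ r_α(V)`, and `r_α(s_β(T)) = r_α(T)` if `β < α`, `= T` if
`β = α`, `= s_β(T)` if `β > α`) is an endomorphism of the homomorphism
quasi-order: `T ≤_h S` implies `r_α(T) ≤_h r_α(S)`. -/
theorem rA_endomorphism {Q : Type} (le : Q → Q → Prop)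
    (hrefl : ∀ q, le q q) (htrans : ∀ a b c, le a b → le b c → le a c)
    (α : Ordinal.{0}) (T S : ITerm Q) (h : HLe le T S) :
    HLe le (rA α T) (rA α S) := by
  induction h with
  | const hpq => exact .const hpq
  | @const_s_left p β V _ ih =>
    rcases lt_trichotomy β α with hb | hb | hb
    · simpa only [rA, if_pos hb] using ih
    · subst hb; simpa only [rA, lt_irrefl, if_neg, if_pos rfl, if_false, if_true] using ih
    · simp only [rA, if_neg (not_lt.mpr hb.le), if_neg hb.ne']
      exact .const_s_left ih
  | @const_s_right p β U _ ih =>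
    rcases lt_trichotomy β α with hb | hb | hb
    · simpa only [rA, if_pos hb] using ih
    · subst hb; simpa only [rA, lt_irrefl, if_neg, if_pos rfl, if_false, if_true] using ih
    · simp only [rA, if_neg (not_lt.mpr hb.le), if_neg hb.ne']
      exact .const_s_right ih
  | @s_eq β U V h ih =>
    rcases lt_trichotomy β α with hb | hb | hb
    · simpa only [rA, if_pos hb] using ih
    · subst hb; simpa only [rA, lt_irrefl, if_neg, if_pos rfl, if_false, if_true] using h
    · simp only [rA, if_neg (not_lt.mpr hb.le), if_neg hb.ne']
      exact .s_eq h
  | @s_gt γ β U V hlt h ih =>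
    rcases lt_trichotomy γ α with hg | hg | hg
    · simp only [rA, if_pos hg, if_pos (hlt.trans hg)] at ih ⊢
      exact ih
    · subst hg
      simp only [rA, lt_irrefl, if_neg, if_pos rfl, if_false, if_true, if_pos hlt] at ih ⊢
      exact ih
    · simp only [rA, if_neg (not_lt.mpr hg.le), if_neg hg.ne'] at ih ⊢
      rcases lt_trichotomy β α with hb | hb | hb
      · simp only [if_pos hb]
        exact ih
      · subst hb
        simp only [lt_irrefl, if_false, if_pos rfl, if_neg]
        exact h
      · simp only [if_neg (not_lt.mpr hb.le), if_neg hb.ne']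
        exact .s_gt hlt h
  | @s_lt γ β U V hlt h ih =>
    rcases lt_trichotomy β α with hb | hb | hb
    · simp only [rA, if_pos hb, if_pos (hlt.trans hb)] at ih ⊢
      exact ih
    · subst hb
      simp only [rA, lt_irrefl, if_neg, if_pos rfl, if_false, if_true, if_pos hlt] at ih ⊢
      exact ih
    · simp only [rA, if_neg (not_lt.mpr hb.le), if_neg hb.ne'] at ih ⊢
      rcases lt_trichotomy γ α with hg | hg | hg
      · simp only [if_pos hg]
        exact ih
      · subst hg
        simp only [lt_irrefl, if_false, if_pos rfl, if_neg]
        exact h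
      · simp only [if_neg (not_lt.mpr hg.le), if_neg hg.ne']
        exact .s_lt hlt h
  | @dot_dot A C B D _ _ ihA ihB =>
    simp only [rA]
    refine .sup_le fun n => ?_
    match n with
    | 0 => exact .le_sup (n := 0) ihA
    | m + 1 =>
      have := ihB m
      simp only [rA] at this
      exact this
  | @dot_drop A C B D n _ ih =>
    simp only [rA] at ih ⊢
    exact .le_sup (n := n + 1) ih
  | @sup_le B T _ ih =>
    exact .sup_le fun n => ih n
  | @le_sup D T n _ ih =>
    exact .le_sup (n := n) ih
  | @dot_sng S A B hS _ _ ihA ihB =>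
    simp only [rA]
    refine .sup_le fun n => ?_
    match n with
    | 0 => exact ihA
    | m + 1 => exact ihB m
  | @sng_dot S C D hS _ ih =>
    simp only [rA]
    exact .le_sup (n := 0) ih
  | @sng_dot_drop S C D n hS _ ih =>
    simp only [rA]
    exact .le_sup (n := n + 1) ih
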